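/- arXiv:1805.03748 — 3 statements merged into one kernel-verified Lean document; each statement's English description precedes it below -/
import Mathlib

section
/- Let ω, μ : (0,r₀] → [0,∞) with ω nondecreasing, and suppose there exist s ≥ 0, α ∈ (0,1), M > 0 such that ω(r) ≤ (1 − 2^{−s})·ω(8r) + 2^s·M·(r/r₀)^α for all 0 < r ≤ r₀/16, and ω(r₀/2) + ω bounded by some constant ω₀. Then there exist σ ∈ (0,1) and c > 0 depending only on s and α such that ω(r) ≤ c·(r/r₀)^σ·(ω(r₀/2) + M) for all 0 < r ≤ r₀/2. -/
set_option maxHeartbeats 1000000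


open Set

/-- Oscillation decay iteration lemma: if `ω : (0,r₀] → [0,∞)` is nondecreasing and
`ω r ≤ (1 − 2^{−s})·ω(8r) + 2^s·M·(r/r₀)^α` for all `0 < r ≤ r₀/16`, then there are
`σ ∈ (0,1)` and `c > 0`, depending only on `s` and `α`, with
`ω r ≤ c·(r/r₀)^σ·(ω(r₀/2) + M)` for all `0 < r ≤ r₀/2`. -/
theorem stmt12 (s α : ℝ) (hs : 0 ≤ s) (hα₀ : 0 < α) (hα₁ : α < 1) :
    ∃ σ : ℝ, σ ∈ Ioo (0:ℝ) 1 ∧ ∃ c > (0:ℝ),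
      ∀ r₀ > (0:ℝ), ∀ M > (0:ℝ), ∀ ω : ℝ → ℝ,
        MonotoneOn ω (Ioc 0 r₀) →
        (∀ r ∈ Ioc (0:ℝ) r₀, 0 ≤ ω r) →
        (∀ r : ℝ, 0 < r → r ≤ r₀ / 16 →
          ω r ≤ (1 - 2 ^ (-s)) * ω (8 * r) + 2 ^ s * M * (r / r₀) ^ α) →
        ∀ r : ℝ, 0 < r → r ≤ r₀ / 2 →
          ω r ≤ c * (r / r₀) ^ σ * (ω (r₀ / 2) + M) := by
  set ε := (2:ℝ) ^ (-s) with hεdef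
  have hε0 : 0 < ε := Real.rpow_pos_of_pos two_pos _
  have hε1 : ε ≤ 1 := Real.rpow_le_one_of_one_le_of_nonpos one_le_two (neg_nonpos.2 hs)
  set σ := min (α/2) (Real.log (1+ε/2) / Real.log 8) with hσdef
  have hlog8 : 0 < Real.log 8 := Real.log_pos (by norm_num)
  have hlog : 0 < Real.log (1+ε/2) := Real.log_pos (by linarith)
  have hσ0 : 0 < σ := lt_min (by linarith) (div_pos hlog hlog8)
  have hσ1 : σ < 1 := lt_of_le_of_lt (min_le_left _ _) (by linarith)
  have hσα : σ ≤ α := le_trans (min_le_left _ _) (by linarith)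
  have h8σ : (8:ℝ) ^ σ ≤ 1 + ε/2 := by
    have h1 : σ * Real.log 8 ≤ Real.log (1+ε/2) := by
      have h := min_le_right (α/2) (Real.log (1+ε/2) / Real.log 8)
      calc σ * Real.log 8 ≤ (Real.log (1+ε/2)/Real.log 8) * Real.log 8 :=
            mul_le_mul_of_nonneg_right h hlog8.le
        _ = Real.log (1+ε/2) := div_mul_cancel₀ _ hlog8.ne'
    calc (8:ℝ)^σ = Real.exp (σ * Real.log 8) := by
          rw [Real.rpow_def_of_pos (by norm_num), mul_comm]
      _ ≤ Real.exp (Real.log (1+ε/2)) := Real.exp_le_exp.2 h1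
      _ = 1 + ε/2 := Real.exp_log (by linarith)
  have h2s : 0 < (2:ℝ) ^ s := Real.rpow_pos_of_pos two_pos _
  have h2s' : 0 < (2:ℝ) ^ (2*s+1) := Real.rpow_pos_of_pos two_pos _
  refine ⟨σ, ⟨hσ0, hσ1⟩, 16 + 2 ^ (2*s+1), by positivity, ?_⟩
  intro r₀ hr₀ M hM ω hmono hnn hiter
  set c := (16:ℝ) + 2 ^ (2*s+1) with hcdef
  have hc16 : (16:ℝ) ≤ c := by linarith
  have hcε : (2:ℝ)^s ≤ c * ε / 2 := by
    have hkey : (2:ℝ)^(2*s+1) * ε = 2 * 2^s := by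
      rw [hεdef, ← Real.rpow_add two_pos]
      have : 2*s+1 + -s = s + 1 := by ring
      rw [this, Real.rpow_add two_pos, Real.rpow_one]
      ring
    nlinarith
  have hW0 : 0 ≤ ω (r₀/2) := hnn _ ⟨by linarith, by linarith⟩
  have hWpos : 0 < ω (r₀/2) + M := by linarith
  have key : ∀ n : ℕ, ∀ r : ℝ, 0 < r → r₀ / (2 * 8^n) < r → r ≤ r₀/2 →
      ω r ≤ c * (r / r₀) ^ σ * (ω (r₀ / 2) + M) := by
    intro n
    induction n with
    | zero =>
        intro r hr h1 h2
        simp only [pow_zero, mul_one] at h1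
        linarith
    | succ n ih =>
        intro r hr h1 h2
        have hx0 : 0 < r/r₀ := div_pos hr hr₀
        have hσpow : 0 < (r/r₀)^σ := Real.rpow_pos_of_pos hx0 _
        by_cases hcase : r₀/16 < r
        · -- base case: r₀/16 < r ≤ r₀/2
          have hωr : ω r ≤ ω (r₀/2) :=
            hmono ⟨hr, by linarith⟩ ⟨by linarith, by linarith⟩ h2
          have hb : (1:ℝ)/16 ≤ r/r₀ := by
            rw [div_le_div_iff₀ (by norm_num) hr₀]; linarith
          have hp : (1/16:ℝ) ≤ (r/r₀)^σ := by
            calc (1/16:ℝ) = (1/16:ℝ)^(1:ℝ) := (Real.rpow_one _).symm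
              _ ≤ (1/16:ℝ)^σ :=
                  Real.rpow_le_rpow_of_exponent_ge (by norm_num) (by norm_num) hσ1.le
              _ ≤ (r/r₀)^σ := Real.rpow_le_rpow (by norm_num) hb hσ0.le
          have h16 : ω (r₀/2) ≤ 16 * (r/r₀)^σ * ω (r₀/2) := by nlinarith
          have hfin : 16 * (r/r₀)^σ * ω (r₀/2) ≤ c * (r/r₀)^σ * (ω (r₀/2) + M) := by
            nlinarith [mul_pos hσpow hM, mul_nonneg (mul_nonneg (by linarith : (0:ℝ) ≤ c - 16) hσpow.le) hW0]
          linarith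
        · -- iterative case: r ≤ r₀/16
          push_neg at hcase
          have h8r2 : 8*r ≤ r₀/2 := by linarith
          have h8rlb : r₀ / (2 * 8^n) < 8*r := by
            rw [div_lt_iff₀ (by positivity)] at h1 ⊢
            have h8 : (8:ℝ)^(n+1) = 8 * 8^n := by ring
            nlinarith [pow_pos (by norm_num : (0:ℝ) < 8) n]
          have hIH := ih (8*r) (by linarith) h8rlb h8r2
          have hit := hiter r hr hcase
          have hx1 : r/r₀ ≤ 1 := by rw [div_le_one hr₀]; linarith
          have h8split : ((8*r)/r₀ : ℝ)^σ = 8^σ * (r/r₀)^σ := by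
            rw [mul_div_assoc, Real.mul_rpow (by norm_num) hx0.le]
          have hασ : (r/r₀)^α ≤ (r/r₀)^σ :=
            Real.rpow_le_rpow_of_exponent_ge hx0 hx1 hσα
          have h8σpos : (0:ℝ) < (8:ℝ)^σ := Real.rpow_pos_of_pos (by norm_num) _
          have hstep1 : (1-ε) * ω (8*r) ≤ (1 - ε/2) * (c * (r/r₀)^σ * (ω (r₀/2) + M)) := by
            have hIH' : ω (8*r) ≤ c * (8^σ * (r/r₀)^σ) * (ω (r₀/2) + M) := by
              rw [← h8split]; exact hIH
            have hθ8 : (1-ε) * 8^σ ≤ 1 - ε/2 := by nlinarith [h8σ, hε0, hε1, h8σpos]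
            calc (1-ε) * ω (8*r) ≤ (1-ε) * (c * (8^σ * (r/r₀)^σ) * (ω (r₀/2) + M)) :=
                  mul_le_mul_of_nonneg_left hIH' (by linarith)
              _ = ((1-ε) * 8^σ) * (c * (r/r₀)^σ * (ω (r₀/2) + M)) := by ring
              _ ≤ (1 - ε/2) * (c * (r/r₀)^σ * (ω (r₀/2) + M)) := by
                  apply mul_le_mul_of_nonneg_right hθ8
                  positivity
          have hstep2 : 2^s * M * (r/r₀)^α ≤ 2^s * (r/r₀)^σ * (ω (r₀/2) + M) := by
            calc (2:ℝ)^s * M * (r/r₀)^α ≤ 2^s * M * (r/r₀)^σ := by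
                  apply mul_le_mul_of_nonneg_left hασ (by positivity)
              _ ≤ 2^s * (r/r₀)^σ * (ω (r₀/2) + M) := by nlinarith [mul_nonneg (mul_nonneg h2s.le hσpow.le) hW0]
          have hfinal : (1 - ε/2) * (c * (r/r₀)^σ * (ω (r₀/2) + M))
              + 2^s * (r/r₀)^σ * (ω (r₀/2) + M) ≤ c * (r/r₀)^σ * (ω (r₀/2) + M) := by
            have hpw : 0 < (r/r₀)^σ * (ω (r₀/2) + M) := mul_pos hσpow hWpos
            nlinarith [mul_le_mul_of_nonneg_right hcε hpw.le]
          calc ω r ≤ (1-ε) * ω (8*r) + 2^s * M * (r/r₀)^α := hit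
            _ ≤ (1 - ε/2) * (c * (r/r₀)^σ * (ω (r₀/2) + M))
                + 2^s * (r/r₀)^σ * (ω (r₀/2) + M) := add_le_add hstep1 hstep2
            _ ≤ c * (r/r₀)^σ * (ω (r₀/2) + M) := hfinal
  intro r hr hr2
  obtain ⟨n, hn⟩ := pow_unbounded_of_one_lt (r₀/(2*r)) (by norm_num : (1:ℝ) < 8)
  refine key n r hr ?_ hr2
  rw [div_lt_iff₀ (by positivity)]
  rw [div_lt_iff₀ (by positivity)] at hn
  nlinarith [pow_pos (by norm_num : (0:ℝ) < 8) n]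
end

section
/- Let A : ℝ^{2n} → ℝ^{2n} be C¹ with symmetric Jacobian DA(z) satisfying F(|z|)·|ξ|² ≤ ⟨DA(z)ξ, ξ⟩ for all z, ξ ∈ ℝ^{2n}, where F(t) = g(t)/t and g is C¹ with g(0)=0 and δ ≤ t·g'(t)/g(t) ≤ g₀ (0 < δ ≤ g₀). Then there is a constant c(g₀) > 0 such that ⟨A(z), z⟩ ≥ c(g₀)·|z|²·F(|z|) ≥ c(g₀)·G(|z|) for all z ≠ 0, where G(t) = ∫₀ᵗ g(s) ds. -/
open Set MeasureTheory
open scoped RealInnerProductSpace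

private lemma aux_antitone (g g' : ℝ → ℝ) (g₀ : ℝ)
    (hderiv : ∀ t > (0:ℝ), HasDerivAt g (g' t) t)
    (hlieb₂ : ∀ t > (0:ℝ), t * g' t ≤ g₀ * g t) :
    AntitoneOn (fun u => g u / u ^ g₀) (Ioi (0:ℝ)) := by
  have hd : ∀ u ∈ Ioi (0:ℝ), HasDerivAt (fun u => g u / u ^ g₀)
      ((g' u * u ^ g₀ - g u * (g₀ * u ^ (g₀ - 1))) / (u ^ g₀) ^ 2) u := fun u hu =>
    (hderiv u hu).div (Real.hasDerivAt_rpow_const (Or.inl (ne_of_gt hu)))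
      (Real.rpow_pos_of_pos hu g₀).ne'
  apply antitoneOn_of_deriv_nonpos (convex_Ioi 0)
  · exact fun u hu => (hd u hu).continuousAt.continuousWithinAt
  · rw [interior_Ioi]
    exact fun u hu => (hd u hu).differentiableAt.differentiableWithinAt
  · rw [interior_Ioi]
    intro u hu
    rw [(hd u hu).deriv]
    apply div_nonpos_of_nonpos_of_nonneg _ (sq_nonneg _)
    have hu' : (0:ℝ) < u := hu
    have e : u ^ g₀ = u * u ^ (g₀ - 1) := by
      rw [Real.rpow_sub hu', Real.rpow_one]
      field_simp
    have h1 : u * g' u ≤ g₀ * g u := hlieb₂ u hu'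
    have h2 : (0:ℝ) ≤ u ^ (g₀ - 1) := (Real.rpow_pos_of_pos hu' _).le
    have h3 : g' u * u ^ g₀ = (u * g' u) * u ^ (g₀ - 1) := by rw [e]; ring
    have h4 : g u * (g₀ * u ^ (g₀ - 1)) = (g₀ * g u) * u ^ (g₀ - 1) := by ring
    linarith [mul_le_mul_of_nonneg_right h1 h2]

/-- Ellipticity: if `A : ℝ^{2n} → ℝ^{2n}` is `C¹` with `A 0 = 0`, symmetric Jacobian,
and `F(‖z‖)·‖ξ‖² ≤ ⟪DA(z)ξ, ξ⟫` where `F t = g t / t` with `g` satisfying the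
Lieberman condition, then there is `c > 0` (depending only on `g₀`) with
`⟪A z, z⟫ ≥ c·‖z‖²·F(‖z‖) ≥ c·G(‖z‖)` for all `z ≠ 0`, where `G t = ∫₀ᵗ g`. -/
theorem stmt14 (n : ℕ) (hn : 1 ≤ n)
    (g g' F G : ℝ → ℝ) (δ g₀ : ℝ) (hδ : 0 < δ) (hδg₀ : δ ≤ g₀)
    (hcont : ContinuousOn g (Ici 0))
    (hderiv : ∀ t > (0:ℝ), HasDerivAt g (g' t) t)
    (hpos : ∀ t > (0:ℝ), 0 < g t) (h0 : g 0 = 0)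
    (hlieb₁ : ∀ t > (0:ℝ), δ * g t ≤ t * g' t)
    (hlieb₂ : ∀ t > (0:ℝ), t * g' t ≤ g₀ * g t)
    (hF : ∀ t, F t = g t / t)
    (hG : ∀ t, G t = ∫ s in (0:ℝ)..t, g s)
    (A : EuclideanSpace ℝ (Fin (2 * n)) → EuclideanSpace ℝ (Fin (2 * n)))
    (DA : EuclideanSpace ℝ (Fin (2 * n)) →
      EuclideanSpace ℝ (Fin (2 * n)) →L[ℝ] EuclideanSpace ℝ (Fin (2 * n)))
    (hA0 : A 0 = 0)
    (hAderiv : ∀ z, HasFDerivAt A (DA z) z)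
    (hsymm : ∀ z ξ η, ⟪DA z ξ, η⟫ = ⟪DA z η, ξ⟫)
    (hlower : ∀ z ξ, F ‖z‖ * ‖ξ‖ ^ 2 ≤ ⟪DA z ξ, ξ⟫) :
    ∃ c > (0:ℝ), ∀ z : EuclideanSpace ℝ (Fin (2 * n)), z ≠ 0 →
      c * (‖z‖ ^ 2 * F ‖z‖) ≤ ⟪A z, z⟫ ∧
      c * G ‖z‖ ≤ c * (‖z‖ ^ 2 * F ‖z‖) := by
  have hg₀ : 0 < g₀ := hδ.trans_le hδg₀
  have h2pos : (0:ℝ) < (2:ℝ) ^ g₀ := Real.rpow_pos_of_pos two_pos g₀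
  refine ⟨(2 * (2:ℝ) ^ g₀)⁻¹, by positivity, fun z hz => ?_⟩
  set c : ℝ := (2 * (2:ℝ) ^ g₀)⁻¹ with hc
  have hcpos : 0 < c := by positivity
  set t : ℝ := ‖z‖ with ht
  have htpos : 0 < t := norm_pos_iff.mpr hz
  -- doubling
  have hanti := aux_antitone g g' g₀ hderiv hlieb₂
  have hdoub : ∀ u, t/2 ≤ u → u ≤ t → g t / (2:ℝ) ^ g₀ ≤ g u := by
    intro u h1 h2
    have hu : 0 < u := lt_of_lt_of_le (by linarith) h1
    have h := hanti (mem_Ioi.mpr hu) (mem_Ioi.mpr htpos) h2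
    have hup : (0:ℝ) < u ^ g₀ := Real.rpow_pos_of_pos hu g₀
    have htp : (0:ℝ) < t ^ g₀ := Real.rpow_pos_of_pos htpos g₀
    have h4 : (t/2) ^ g₀ ≤ u ^ g₀ := Real.rpow_le_rpow (by positivity) h1 hg₀.le
    have h5 : (t/2) ^ g₀ = t ^ g₀ / 2 ^ g₀ := Real.div_rpow htpos.le (by norm_num) g₀
    have hgu : (0:ℝ) ≤ g u := (hpos u hu).le
    calc g t / (2:ℝ) ^ g₀ = g t / t ^ g₀ * ((t/2) ^ g₀) := by
          rw [h5]; field_simp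
      _ ≤ g u / u ^ g₀ * ((t/2) ^ g₀) :=
          mul_le_mul_of_nonneg_right h (by positivity)
      _ ≤ g u / u ^ g₀ * u ^ g₀ :=
          mul_le_mul_of_nonneg_left h4 (by positivity)
      _ = g u := div_mul_cancel₀ _ hup.ne'
  -- the function φ s = ⟪A (s•z), z⟫
  set φ : ℝ → ℝ := fun s => ⟪A (s • z), z⟫ with hφdef
  have hφ : ∀ s : ℝ, HasDerivAt φ ⟪DA (s • z) z, z⟫ s := by
    intro s
    have h1 : HasDerivAt (fun s : ℝ => s • z) z s := by
      simpa using (hasDerivAt_id s).smul_const z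
    have h2 : HasDerivAt (fun s : ℝ => A (s • z)) (DA (s • z) z) s :=
      (hAderiv (s • z)).comp_hasDerivAt s h1
    have h3 := h2.inner (𝕜 := ℝ) (hasDerivAt_const s z)
    simpa using h3
  have hφc : Continuous φ := continuous_iff_continuousAt.mpr fun s => (hφ s).continuousAt
  have hder_lb : ∀ s : ℝ, 0 < s → g (s * t) / (s * t) * t ^ 2 ≤ ⟪DA (s • z) z, z⟫ := by
    intro s hs
    have h := hlower (s • z) z
    rw [norm_smul] at h
    simp only [Real.norm_eq_abs, abs_of_pos hs, ← ht, hF] at h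
    exact h
  -- φ is monotone on [0, 1/2]
  have hmono1 : MonotoneOn φ (Icc (0:ℝ) (1/2)) := by
    apply monotoneOn_of_deriv_nonneg (convex_Icc _ _) hφc.continuousOn
      (fun s _ => (hφ s).differentiableAt.differentiableWithinAt)
    intro s hs
    rw [interior_Icc] at hs
    rw [(hφ s).deriv]
    refine le_trans ?_ (hder_lb s hs.1)
    have hst : 0 < s * t := mul_pos hs.1 htpos
    exact mul_nonneg (div_nonneg (hpos _ hst).le hst.le) (sq_nonneg t)
  -- the shifted function is monotone on [1/2, 1]
  set m : ℝ := g t * t / (2:ℝ) ^ g₀ with hm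
  have hψ : ∀ s : ℝ, HasDerivAt (fun s => φ s - m * s) (⟪DA (s • z) z, z⟫ - m) s := by
    intro s
    exact ((hφ s).sub ((hasDerivAt_id' s).const_mul m)).congr_deriv (by ring)
  have hmono2 : MonotoneOn (fun s => φ s - m * s) (Icc (1/2:ℝ) 1) := by
    refine monotoneOn_of_deriv_nonneg (convex_Icc _ _) ?_
      (fun s _ => (hψ s).differentiableAt.differentiableWithinAt) ?_
    · exact (hφc.sub (continuous_mul_left m)).continuousOn
    intro s hs
    rw [interior_Icc] at hs
    rw [(hψ s).deriv]
    have hs0 : (0:ℝ) < s := lt_trans (by norm_num) hs.1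
    have hst : 0 < s * t := mul_pos hs0 htpos
    have h1 : g t / (2:ℝ) ^ g₀ ≤ g (s * t) :=
      hdoub (s * t) (by nlinarith [hs.1, hs.2, htpos]) (by nlinarith [hs.1, hs.2, htpos])
    have hgst : (0:ℝ) ≤ g (s * t) := (hpos _ hst).le
    have e : g (s * t) / (s * t) * t ^ 2 = g (s * t) * t / s := by
      field_simp
    have h4 := hder_lb s hs0
    rw [e] at h4
    have h2 : g (s * t) * t ≤ g (s * t) * t / s := by
      rw [le_div_iff₀ hs0]
      nlinarith [hs.2, mul_nonneg hgst htpos.le]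
    have h3 : m ≤ g (s * t) * t := by
      rw [hm]
      calc g t * t / (2:ℝ) ^ g₀ = g t / (2:ℝ) ^ g₀ * t := by ring
        _ ≤ g (s * t) * t := mul_le_mul_of_nonneg_right h1 htpos.le
    linarith
  have hφ0 : φ 0 = 0 := by
    simp [hφdef, hA0]
  have k1 : φ 0 ≤ φ (1/2) := hmono1 (by constructor <;> norm_num)
    (by constructor <;> norm_num) (by norm_num)
  have k2 : φ (1/2) - m * (1/2) ≤ φ 1 - m * 1 := hmono2
    (by constructor <;> norm_num) (by constructor <;> norm_num) (by norm_num)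
  have hφ1 : φ 1 = ⟪A z, z⟫ := by simp [hφdef]
  have main : m / 2 ≤ ⟪A z, z⟫ := by rw [← hφ1]; linarith
  constructor
  · have e1 : c * (t ^ 2 * F t) = m / 2 := by
      rw [hF, hm, hc]
      field_simp
    rw [e1]
    exact main
  · have hgt : (0:ℝ) ≤ g t := (hpos t htpos).le
    have hmonog : MonotoneOn g (Icc (0:ℝ) t) := by
      apply monotoneOn_of_deriv_nonneg (convex_Icc _ _)
        (hcont.mono (fun x hx => hx.1))
      · intro s hs
        rw [interior_Icc] at hs
        exact (hderiv s hs.1).differentiableAt.differentiableWithinAt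
      · intro s hs
        rw [interior_Icc] at hs
        rw [(hderiv s hs.1).deriv]
        have h1 := hlieb₁ s hs.1
        have h2 := hpos s hs.1
        nlinarith [mul_pos hδ h2, hs.1]
    have hint : IntervalIntegrable g volume 0 t :=
      (hcont.mono (by rw [uIcc_of_le htpos.le]; exact fun x hx => hx.1)).intervalIntegrable
    have hGle : G t ≤ t * g t := by
      rw [hG]
      calc (∫ s in (0:ℝ)..t, g s) ≤ ∫ _ in (0:ℝ)..t, g t := by
            apply intervalIntegral.integral_mono_on htpos.le hint intervalIntegrable_const
            intro s hs
            exact hmonog hs (right_mem_Icc.mpr htpos.le) hs.2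
        _ = t * g t := by simp [smul_eq_mul]
    have e2 : t ^ 2 * F t = t * g t := by
      rw [hF]; field_simp
    rw [e2]
    calc c * G t ≤ c * (t * g t) := mul_le_mul_of_nonneg_left hGle hcpos.le
      _ = c * (t * g t) := rfl
end

section
/- Let A : ℝ^{2n} → ℝ^{2n} be C¹ with A(0)=0 and symmetric Jacobian satisfying F(|z|)·|ξ|² ≤ ⟨DA(z)ξ, ξ⟩ ≤ L·F(|z|)·|ξ|² for all z, ξ, where F(t) = g(t)/t and g is C¹, g(0)=0, with δ ≤ t g'(t)/g(t) ≤ g₀ (0 < δ ≤ g₀). Then there is c = c(g₀, L) > 0 such that for all z, w ∈ ℝ^{2n}: if |z−w| ≤ 2|z| then ⟨A(z)−A(w), z−w⟩ ≥ c·|z−w|²·F(|z|), and if |z−w| > 2|z| then ⟨A(z)−A(w), z−w⟩ ≥ c·|z−w|²·F(|z−w|). -/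
open Set
open scoped RealInnerProductSpace

set_option maxHeartbeats 1000000 in
/-- Monotonicity inequality: if `A : ℝ^{2n} → ℝ^{2n}` is `C¹` with `A 0 = 0`, symmetric
Jacobian satisfying `F(‖z‖)·‖ξ‖² ≤ ⟪DA(z)ξ, ξ⟫ ≤ L·F(‖z‖)·‖ξ‖²` with `F t = g t / t`
and `g` in the Lieberman class, then there is `c = c(g₀, L) > 0` such that for all
`z, w`: if `‖z−w‖ ≤ 2‖z‖` then `⟪A z − A w, z − w⟫ ≥ c·‖z−w‖²·F(‖z‖)`, and if
`‖z−w‖ > 2‖z‖` then `⟪A z − A w, z − w⟫ ≥ c·‖z−w‖²·F(‖z−w‖)`. -/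
theorem stmt15 (n : ℕ) (hn : 1 ≤ n) (L : ℝ) (hL : 1 ≤ L)
    (g g' F : ℝ → ℝ) (δ g₀ : ℝ) (hδ : 0 < δ) (hδg₀ : δ ≤ g₀)
    (hcont : ContinuousOn g (Ici 0))
    (hderiv : ∀ t > (0:ℝ), HasDerivAt g (g' t) t)
    (hpos : ∀ t > (0:ℝ), 0 < g t) (h0 : g 0 = 0)
    (hlieb₁ : ∀ t > (0:ℝ), δ * g t ≤ t * g' t)
    (hlieb₂ : ∀ t > (0:ℝ), t * g' t ≤ g₀ * g t)
    (hF : ∀ t, F t = g t / t)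
    (A : EuclideanSpace ℝ (Fin (2 * n)) → EuclideanSpace ℝ (Fin (2 * n)))
    (DA : EuclideanSpace ℝ (Fin (2 * n)) →
      EuclideanSpace ℝ (Fin (2 * n)) →L[ℝ] EuclideanSpace ℝ (Fin (2 * n)))
    (hA0 : A 0 = 0)
    (hAderiv : ∀ z, HasFDerivAt A (DA z) z)
    (hsymm : ∀ z ξ η, ⟪DA z ξ, η⟫ = ⟪DA z η, ξ⟫)
    (hlower : ∀ z ξ, F ‖z‖ * ‖ξ‖ ^ 2 ≤ ⟪DA z ξ, ξ⟫)
    (hupper : ∀ z ξ, ⟪DA z ξ, ξ⟫ ≤ L * (F ‖z‖ * ‖ξ‖ ^ 2)) :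
    ∃ c > (0:ℝ), ∀ z w : EuclideanSpace ℝ (Fin (2 * n)),
      (‖z - w‖ ≤ 2 * ‖z‖ →
        c * (‖z - w‖ ^ 2 * F ‖z‖) ≤ ⟪A z - A w, z - w⟫) ∧
      (2 * ‖z‖ < ‖z - w‖ →
        c * (‖z - w‖ ^ 2 * F ‖z - w‖) ≤ ⟪A z - A w, z - w⟫) := by
  -- positivity of g₀
  have hg₀ : 0 < g₀ := lt_of_lt_of_le hδ hδg₀
  -- monotonicity of g on [0, ∞)
  have gmono : MonotoneOn g (Ici 0) := by
    apply monotoneOn_of_deriv_nonneg (convex_Ici 0) hcont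
    · intro x hx
      rw [interior_Ici] at hx
      exact ((hderiv x hx).differentiableAt).differentiableWithinAt
    · intro x hx
      rw [interior_Ici] at hx
      rw [(hderiv x hx).deriv]
      have hx' : (0:ℝ) < x := hx
      have h1 := hlieb₁ x hx'
      have h2 := hpos x hx'
      nlinarith [mul_pos hδ h2]
  -- doubling property
  have hdoub : ∀ a b : ℝ, 0 < a → a ≤ b → g b ≤ (b / a) ^ g₀ * g a := by
    intro a b ha hab
    have hb : 0 < b := lt_of_lt_of_le ha hab
    have hψ : ∀ x : ℝ, 0 < x →
        HasDerivAt (fun x => g₀ * Real.log x - Real.log (g x)) (g₀ * x⁻¹ - g' x / g x) x := by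
      intro x hx
      exact ((Real.hasDerivAt_log hx.ne').const_mul g₀).sub
        ((hderiv x hx).log (hpos x hx).ne')
    have hmono : MonotoneOn (fun x => g₀ * Real.log x - Real.log (g x)) (Ici a) := by
      apply monotoneOn_of_deriv_nonneg (convex_Ici a)
      · intro x hx
        exact ((hψ x (lt_of_lt_of_le ha hx)).differentiableAt).continuousAt.continuousWithinAt
      · intro x hx
        rw [interior_Ici] at hx
        exact ((hψ x (ha.trans hx)).differentiableAt).differentiableWithinAt
      · intro x hx
        rw [interior_Ici] at hx
        have hx0 : 0 < x := ha.trans hx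
        rw [(hψ x hx0).deriv]
        have h1 := hlieb₂ x hx0
        have h2 := hpos x hx0
        rw [sub_nonneg, div_le_iff₀ h2]
        have heq : g₀ * x⁻¹ * g x = g₀ * g x / x := by field_simp
        rw [heq, le_div_iff₀ hx0]
        linarith
    have key := hmono (self_mem_Ici) (mem_Ici.mpr hab) hab
    simp only at key
    have hga : 0 < g a := hpos a ha
    have hgb : 0 < g b := hpos b hb
    have hlog : Real.log (g b) ≤ Real.log (g a) + g₀ * Real.log (b / a) := by
      rw [Real.log_div hb.ne' ha.ne']
      linarith
    calc g b = Real.exp (Real.log (g b)) := (Real.exp_log hgb).symm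
      _ ≤ Real.exp (Real.log (g a) + g₀ * Real.log (b / a)) := Real.exp_le_exp.mpr hlog
      _ = (b / a) ^ g₀ * g a := by
          rw [Real.exp_add, Real.exp_log hga, Real.rpow_def_of_pos (div_pos hb ha)]
          ring
  -- lower bound for F on comparable scales
  have hFb : ∀ r t : ℝ, 0 < r → r / 4 ≤ t → t ≤ 3 * r → (4:ℝ) ^ (-g₀) / 3 * F r ≤ F t := by
    intro r t hr h1 h2
    have hr4 : 0 < r / 4 := by linarith
    have ht : 0 < t := lt_of_lt_of_le hr4 h1
    have h4 : (0:ℝ) < (4:ℝ) ^ g₀ := Real.rpow_pos_of_pos (by norm_num) _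
    have hg1 : g r ≤ (4:ℝ) ^ g₀ * g (r / 4) := by
      have := hdoub (r / 4) r hr4 (by linarith)
      rwa [show r / (r / 4) = (4:ℝ) by field_simp] at this
    have hg2 : g (r / 4) ≤ g t := gmono (mem_Ici.mpr hr4.le) (mem_Ici.mpr ht.le) h1
    have hgr : 0 < g r := hpos r hr
    have hgt : 0 < g t := hpos t ht
    rw [hF, hF]
    have e1 : (4:ℝ) ^ (-g₀) * g r ≤ g t := by
      rw [Real.rpow_neg (by norm_num : (0:ℝ) ≤ 4)]
      rw [inv_mul_le_iff₀ h4]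
      calc g r ≤ (4:ℝ) ^ g₀ * g (r / 4) := hg1
        _ ≤ (4:ℝ) ^ g₀ * g t := by nlinarith
    calc (4:ℝ) ^ (-g₀) / 3 * (g r / r) = ((4:ℝ) ^ (-g₀) * g r) / (3 * r) := by ring
      _ ≤ g t / (3 * r) := by gcongr
      _ ≤ g t / t := by gcongr
  -- nonnegativity of F
  have hFnn : ∀ t : ℝ, 0 ≤ t → 0 ≤ F t := by
    intro t ht
    rcases ht.eq_or_lt with h | h
    · rw [hF, ← h, h0]; simp
    · rw [hF]; exact le_of_lt (div_pos (hpos t h) h)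
  refine ⟨(4:ℝ) ^ (-g₀) / 12, by positivity, ?_⟩
  intro z w
  set v : EuclideanSpace ℝ (Fin (2 * n)) := z - w with hvdef
  set φ : ℝ → ℝ := fun s => ⟪A (w + s • v), v⟫ with hφdef
  have hder : ∀ s : ℝ, HasDerivAt φ ⟪DA (w + s • v) v, v⟫ s := by
    intro s
    have h1 : HasDerivAt (fun s : ℝ => w + s • v) v s := by
      simpa using ((hasDerivAt_id s).smul_const v).const_add w
    have h2 := (hAderiv (w + s • v)).comp_hasDerivAt s h1
    have h3 := HasDerivAt.inner ℝ h2 (hasDerivAt_const s v)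
    simpa [Function.comp] using h3
  have hdiff : Differentiable ℝ φ := fun s => (hder s).differentiableAt
  have hderiv_eq : ∀ s : ℝ, deriv φ s = ⟪DA (w + s • v) v, v⟫ := fun s => (hder s).deriv
  have hlow : ∀ s : ℝ, F ‖w + s • v‖ * ‖v‖ ^ 2 ≤ deriv φ s := by
    intro s; rw [hderiv_eq]; exact hlower _ _
  have hd0 : ∀ s : ℝ, 0 ≤ deriv φ s := by
    intro s
    refine le_trans ?_ (hlow s)
    have := hFnn ‖w + s • v‖ (norm_nonneg _)
    positivity
  have hmono : ∀ a b : ℝ, a ≤ b → 0 ≤ φ b - φ a := by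
    intro a b hab
    have := mul_sub_le_image_sub_of_le_deriv hdiff hd0 hab
    linarith [this]
  have hφ1 : φ 1 = ⟪A z, v⟫ := by
    have h : w + (1:ℝ) • v = z := by rw [hvdef]; module
    show ⟪A (w + (1:ℝ) • v), v⟫ = ⟪A z, v⟫
    rw [h]
  have hφ0 : φ 0 = ⟪A w, v⟫ := by simp [hφdef]
  have hinner : ⟪A z - A w, v⟫ = φ 1 - φ 0 := by
    rw [hφ1, hφ0, inner_sub_left]
  constructor
  · -- case ‖z - w‖ ≤ 2‖z‖
    intro hle
    by_cases hz : z = 0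
    · have hv0 : v = 0 := by
        have h := hle
        rw [hz] at h
        simp only [norm_zero, mul_zero] at h
        exact norm_le_zero_iff.mp h
      rw [hv0]
      simp
    · have hz' : 0 < ‖z‖ := norm_pos_iff.mpr hz
      have hC : ∀ s ∈ interior (Icc (3/4 : ℝ) 1),
          (4:ℝ) ^ (-g₀) / 3 * F ‖z‖ * ‖v‖ ^ 2 ≤ deriv φ s := by
        intro s hs
        rw [interior_Icc] at hs
        obtain ⟨hs1, hs2⟩ := hs
        have hrep : w + s • v = z - (1 - s) • v := by
          rw [hvdef]; module
        have hsm : ‖(1 - s) • v‖ ≤ 1/4 * (2 * ‖z‖) := by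
          rw [norm_smul, Real.norm_eq_abs, abs_of_nonneg (by linarith)]
          apply mul_le_mul (by linarith) hle (norm_nonneg _) (by norm_num)
        have hn1 : ‖z‖ / 4 ≤ ‖w + s • v‖ := by
          rw [hrep]
          have := norm_sub_norm_le z ((1 - s) • v)
          linarith
        have hn2 : ‖w + s • v‖ ≤ 3 * ‖z‖ := by
          rw [hrep]
          have := norm_sub_le z ((1 - s) • v)
          linarith
        refine le_trans ?_ (hlow s)
        have := hFb ‖z‖ ‖w + s • v‖ hz' hn1 hn2
        nlinarith [sq_nonneg ‖v‖]
      have key := Convex.mul_sub_le_image_sub_of_le_deriv (convex_Icc (3/4 : ℝ) 1)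
        hdiff.continuous.continuousOn
        (fun x _ => (hder x).differentiableAt.differentiableWithinAt) hC
        (3/4) (by norm_num [mem_Icc]) 1 (by norm_num [mem_Icc]) (by norm_num)
      have key2 := hmono 0 (3/4) (by norm_num)
      rw [hinner]
      have heq : (4:ℝ) ^ (-g₀) / 3 * F ‖z‖ * ‖v‖ ^ 2 * (1 - 3/4)
          = (4:ℝ) ^ (-g₀) / 12 * (‖v‖ ^ 2 * F ‖z‖) := by ring
      linarith [key, key2]
  · -- case 2‖z‖ < ‖z - w‖
    intro hlt
    have hv' : 0 < ‖v‖ := lt_of_le_of_lt (by positivity) hlt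
    have hwz : w = z - v := by rw [hvdef]; abel
    have hC : ∀ s ∈ interior (Icc (0 : ℝ) (1/4)),
        (4:ℝ) ^ (-g₀) / 3 * F ‖v‖ * ‖v‖ ^ 2 ≤ deriv φ s := by
      intro s hs
      rw [interior_Icc] at hs
      obtain ⟨hs1, hs2⟩ := hs
      have hsv : ‖s • v‖ ≤ 1/4 * ‖v‖ := by
        rw [norm_smul, Real.norm_eq_abs, abs_of_nonneg hs1.le]
        apply mul_le_mul_of_nonneg_right (le_of_lt hs2) (norm_nonneg _)
      have hwlow : ‖v‖ - ‖z‖ ≤ ‖w‖ := by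
        have h1 := norm_sub_norm_le v z
        have h2 : v - z = -w := by rw [hvdef]; abel
        rw [h2, norm_neg] at h1
        exact h1
      have hwup : ‖w‖ ≤ ‖z‖ + ‖v‖ := by
        rw [hwz]
        have := norm_sub_le z v
        linarith
      have ha : ‖w‖ ≤ ‖w + s • v‖ + ‖s • v‖ := by
        have h1 := norm_sub_le (w + s • v) (s • v)
        have h2 : w + s • v - s • v = w := by abel
        rw [h2] at h1
        linarith
      have hn1 : ‖v‖ / 4 ≤ ‖w + s • v‖ := by linarith
      have hn2 : ‖w + s • v‖ ≤ 3 * ‖v‖ := by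
        have := norm_add_le w (s • v)
        linarith
      refine le_trans ?_ (hlow s)
      have := hFb ‖v‖ ‖w + s • v‖ hv' hn1 hn2
      nlinarith [sq_nonneg ‖v‖]
    have key := Convex.mul_sub_le_image_sub_of_le_deriv (convex_Icc (0 : ℝ) (1/4))
      hdiff.continuous.continuousOn
      (fun x _ => (hder x).differentiableAt.differentiableWithinAt) hC
      0 (by norm_num [mem_Icc]) (1/4) (by norm_num [mem_Icc]) (by norm_num)
    have key2 := hmono (1/4) 1 (by norm_num)
    rw [hinner]
    have heq : (4:ℝ) ^ (-g₀) / 3 * F ‖v‖ * ‖v‖ ^ 2 * (1/4 - 0)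
        = (4:ℝ) ^ (-g₀) / 12 * (‖v‖ ^ 2 * F ‖v‖) := by ring
    linarith [key, key2]
end
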